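/- arXiv:1410.7558 — 3 statements merged into one kernel-verified Lean document; each statement's English description precedes it below -/
import Mathlib

section
/- Let x : [0,T] → ℝ^d be differentiable with x(T) = −E(T)⁻¹ h(T) and x'(t) = (A(t) + E(t)/λ) x(t) + r(t) + (1/λ) h(t) for all t ∈ [0,T], and define the control u(t) := (1/λ)(E(t) x(t) + h(t)) and the initial condition x₀ := x(0). Then x solves x'(t) = A(t)x(t) + r(t) + u(t), and the cost is exactly the closed-form value: x₀ᵀQx₀ + ∫₀ᵀ ‖ζ(t) − Cx(t)‖² dt + λ ∫₀ᵀ ‖u(t)‖² dt = ∫₀ᵀ (‖ζ(t)‖² − 2 r(t)ᵀ h(t) − (1/λ)‖h(t)‖²) dt − h(T)ᵀ E(T)⁻¹ h(T). -/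
open Matrix Set intervalIntegral
open scoped Matrix

noncomputable section

/-- Euclidean norm of a real vector. -/
def evnorm {n : Type*} [Fintype n] (v : n → ℝ) : ℝ :=
  Real.sqrt (∑ i, (v i) ^ 2)

lemma evnorm_sq {n : Type*} [Fintype n] (v : n → ℝ) : evnorm v ^ 2 = v ⬝ᵥ v := by
  rw [evnorm, Real.sq_sqrt (by positivity)]
  simp [dotProduct, pow_two]

lemma tdot {m n : Type*} [Fintype m] [Fintype n] (M : Matrix m n ℝ) (v : m → ℝ) (w : n → ℝ) :
    (Mᵀ *ᵥ v) ⬝ᵥ w = v ⬝ᵥ (M *ᵥ w) := by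
  rw [Matrix.mulVec_transpose, ← Matrix.dotProduct_mulVec]

lemma dot_tmv {m n : Type*} [Fintype m] [Fintype n] (M : Matrix m n ℝ) (v : n → ℝ) (w : m → ℝ) :
    v ⬝ᵥ (Mᵀ *ᵥ w) = (M *ᵥ v) ⬝ᵥ w := by
  rw [Matrix.dotProduct_mulVec, Matrix.vecMul_transpose]

lemma key_identity {d d' : ℕ} (lam : ℝ) (hlam : lam ≠ 0)
    (C : Matrix (Fin d') (Fin d) ℝ) (a e : Matrix (Fin d) (Fin d) ℝ) (he : eᵀ = e)
    (xx hh rr : Fin d → ℝ) (zz : Fin d' → ℝ) :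
    (zz - C *ᵥ xx) ⬝ᵥ (zz - C *ᵥ xx)
      + lam * (((1/lam) • (e *ᵥ xx + hh)) ⬝ᵥ ((1/lam) • (e *ᵥ xx + hh)))
    = zz ⬝ᵥ zz - 2*(rr ⬝ᵥ hh) - (1/lam)*(hh ⬝ᵥ hh)
      + (((a + (1/lam) • e) *ᵥ xx + rr + (1/lam) • hh) ⬝ᵥ (e *ᵥ xx)
        + xx ⬝ᵥ ((Cᵀ*C - aᵀ*e - e*a - (1/lam) • (e*e)) *ᵥ xx
                  + e *ᵥ ((a + (1/lam) • e) *ᵥ xx + rr + (1/lam) • hh))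
        + 2*((-((aᵀ + (1/lam) • e) *ᵥ hh) - (Cᵀ *ᵥ zz + e *ᵥ rr)) ⬝ᵥ xx
             + hh ⬝ᵥ ((a + (1/lam) • e) *ᵥ xx + rr + (1/lam) • hh))) := by
  have sym : ∀ (v : Fin d → ℝ) (Y : Fin d → ℝ), v ⬝ᵥ (e *ᵥ Y) = (e *ᵥ v) ⬝ᵥ Y := by
    intro v Y; rw [← he, dot_tmv, he]
  simp only [Matrix.add_mulVec, Matrix.sub_mulVec, Matrix.smul_mulVec,
    Matrix.mulVec_add, Matrix.mulVec_smul, ← Matrix.mulVec_mulVec,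
    dotProduct_add, add_dotProduct, dotProduct_sub,
    sub_dotProduct, dotProduct_smul, smul_dotProduct,
    neg_dotProduct, dotProduct_neg, smul_eq_mul,
    tdot, dot_tmv, sym]
  have f1 : C *ᵥ xx ⬝ᵥ zz = zz ⬝ᵥ C *ᵥ xx := dotProduct_comm _ _
  have f2 : e *ᵥ hh ⬝ᵥ xx = e *ᵥ xx ⬝ᵥ hh := by
    rw [← he, tdot, he, dotProduct_comm]
  have f3 : e *ᵥ rr ⬝ᵥ xx = e *ᵥ xx ⬝ᵥ rr := by
    rw [← he, tdot, he, dotProduct_comm]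
  have f4 : hh ⬝ᵥ rr = rr ⬝ᵥ hh := dotProduct_comm _ _
  rw [f1, f2, f3, f4]
  field_simp
  ring

lemma hasDerivAt_dotProduct {n : Type*} [Fintype n] {f g : ℝ → n → ℝ} {f' g' : n → ℝ} {t : ℝ}
    (hf : ∀ i, HasDerivAt (fun s => f s i) (f' i) t)
    (hg : ∀ i, HasDerivAt (fun s => g s i) (g' i) t) :
    HasDerivAt (fun s => f s ⬝ᵥ g s) (f' ⬝ᵥ g t + f t ⬝ᵥ g') t := by
  have H := HasDerivAt.fun_sum
    (fun i (_ : i ∈ Finset.univ) => (hf i).mul (hg i))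
  simpa [dotProduct, Finset.sum_add_distrib] using H

lemma hasDerivAt_mulVec {n m : Type*} [Fintype n] {M : ℝ → Matrix m n ℝ} {v : ℝ → n → ℝ}
    {M' : Matrix m n ℝ} {v' : n → ℝ} {t : ℝ}
    (hM : ∀ i j, HasDerivAt (fun s => M s i j) (M' i j) t)
    (hv : ∀ j, HasDerivAt (fun s => v s j) (v' j) t) (i : m) :
    HasDerivAt (fun s => (M s *ᵥ v s) i) ((M' *ᵥ v t + M t *ᵥ v') i) t := by
  have H := hasDerivAt_dotProduct (f := fun s => M s i) (g := v)
    (f' := M' i) (g' := v') (hM i) hv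
  simpa [Matrix.mulVec, dotProduct] using H

lemma continuousOn_dotProduct {n : Type*} [Fintype n] {f g : ℝ → n → ℝ} {s : Set ℝ}
    (hf : ∀ i, ContinuousOn (fun t => f t i) s)
    (hg : ∀ i, ContinuousOn (fun t => g t i) s) :
    ContinuousOn (fun t => f t ⬝ᵥ g t) s := by
  simp only [dotProduct]
  exact continuousOn_finset_sum _ fun i _ => (hf i).mul (hg i)

/-- the closed-loop trajectory with final value `x(T) = −E(T)⁻¹h(T)` and
control `u = (1/λ)(Ex + h)` solves the controlled ODE, and its cost equals exactly the
closed-form value `S`. -/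
theorem statement13
    (d d' : ℕ) (hd : 1 ≤ d) (hd' : 1 ≤ d') (T : ℝ) (hT : 0 < T) (lam : ℝ) (hlam : 0 < lam)
    (C : Matrix (Fin d') (Fin d) ℝ)
    (A : ℝ → Matrix (Fin d) (Fin d) ℝ)
    (r : ℝ → Fin d → ℝ) (ζ : ℝ → Fin d' → ℝ)
    (hA : ∀ i j, ContinuousOn (fun t => A t i j) (Icc 0 T))
    (hr : ∀ i, ContinuousOn (fun t => r t i) (Icc 0 T))
    (hζ : ∀ i, ContinuousOn (fun t => ζ t i) (Icc 0 T))
    (Q : Matrix (Fin d) (Fin d) ℝ) (hQ : Q.PosSemidef)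
    (E : ℝ → Matrix (Fin d) (Fin d) ℝ)
    (hE0 : E 0 = Q)
    (hE : ∀ t ∈ Icc (0:ℝ) T, ∀ i j,
      HasDerivAt (fun s => E s i j)
        ((Cᵀ * C - (A t)ᵀ * E t - E t * A t - (1 / lam) • (E t * E t)) i j) t)
    (hEsymm : ∀ t ∈ Icc (0:ℝ) T, (E t)ᵀ = E t)
    (hET : IsUnit (E T))
    (h : ℝ → Fin d → ℝ)
    (hh0 : h 0 = 0)
    (hh : ∀ t ∈ Icc (0:ℝ) T, ∀ i,
      HasDerivAt (fun s => h s i)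
        ((-(((A t)ᵀ + (1 / lam) • E t).mulVec (h t))
          - (Cᵀ.mulVec (ζ t) + (E t).mulVec (r t))) i) t)
    (x : ℝ → Fin d → ℝ)
    (hxT : x T = -(E T)⁻¹.mulVec (h T))
    (hx : ∀ t ∈ Icc (0:ℝ) T, ∀ i,
      HasDerivAt (fun s => x s i)
        (((A t + (1 / lam) • E t).mulVec (x t) + r t + (1 / lam) • h t) i) t)
    (u : ℝ → Fin d → ℝ)
    (hu : ∀ t, u t = (1 / lam) • ((E t).mulVec (x t) + h t))
    (x₀ : Fin d → ℝ) (hx₀ : x₀ = x 0) :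
    (∀ t ∈ Icc (0:ℝ) T, ∀ i,
      HasDerivAt (fun s => x s i) (((A t).mulVec (x t) + r t + u t) i) t)
    ∧ x₀ ⬝ᵥ Q.mulVec x₀
        + (∫ t in (0:ℝ)..T, evnorm (ζ t - C.mulVec (x t)) ^ 2)
        + lam * ∫ t in (0:ℝ)..T, evnorm (u t) ^ 2
      = (∫ t in (0:ℝ)..T,
          (evnorm (ζ t) ^ 2 - 2 * (r t ⬝ᵥ h t) - (1 / lam) * evnorm (h t) ^ 2))
        - h T ⬝ᵥ (E T)⁻¹.mulVec (h T) := by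
  have hlam' : lam ≠ 0 := ne_of_gt hlam
  constructor
  · intro t ht i
    have H := hx t ht i
    have : ((A t + (1 / lam) • E t).mulVec (x t) + r t + (1 / lam) • h t) i
        = (((A t).mulVec (x t) + r t + u t)) i := by
      rw [hu]
      simp [Matrix.add_mulVec, Matrix.smul_mulVec, smul_add]
      ring
    rwa [this] at H
  -- continuity of components
  have hxc : ∀ i, ContinuousOn (fun t => x t i) (Icc 0 T) :=
    fun i t ht => ((hx t ht i).continuousAt).continuousWithinAt
  have hhc : ∀ i, ContinuousOn (fun t => h t i) (Icc 0 T) :=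
    fun i t ht => ((hh t ht i).continuousAt).continuousWithinAt
  have hEc : ∀ i j, ContinuousOn (fun t => E t i j) (Icc 0 T) :=
    fun i j t ht => ((hE t ht i j).continuousAt).continuousWithinAt
  have hCxc : ∀ i, ContinuousOn (fun t => (C *ᵥ x t) i) (Icc 0 T) := by
    intro i
    simp only [Matrix.mulVec, dotProduct]
    exact continuousOn_finset_sum _ fun j _ => (continuousOn_const).mul (hxc j)
  have hExc : ∀ i, ContinuousOn (fun t => (E t *ᵥ x t) i) (Icc 0 T) := by
    intro i
    simp only [Matrix.mulVec, dotProduct]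
    exact continuousOn_finset_sum _ fun j _ => (hEc i j).mul (hxc j)
  have huc : ∀ i, ContinuousOn (fun t => u t i) (Icc 0 T) := by
    intro i
    simp only [hu, Pi.smul_apply, Pi.add_apply, smul_eq_mul]
    exact continuousOn_const.mul ((hExc i).add (hhc i))
  -- dot-form integrands
  set F1 : ℝ → ℝ := fun t => (ζ t - C *ᵥ x t) ⬝ᵥ (ζ t - C *ᵥ x t) with hF1
  set F2 : ℝ → ℝ := fun t => u t ⬝ᵥ u t with hF2
  set G0 : ℝ → ℝ := fun t => ζ t ⬝ᵥ ζ t - 2*(r t ⬝ᵥ h t) - (1/lam)*(h t ⬝ᵥ h t) with hG0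
  have hF1c : ContinuousOn F1 (Icc 0 T) :=
    continuousOn_dotProduct (fun i => (hζ i).sub (hCxc i)) (fun i => (hζ i).sub (hCxc i))
  have hF2c : ContinuousOn F2 (Icc 0 T) := continuousOn_dotProduct huc huc
  have hG0c : ContinuousOn G0 (Icc 0 T) := by
    apply ((continuousOn_dotProduct hζ hζ).sub
      ((continuousOn_const).mul (continuousOn_dotProduct hr hhc))).sub
      ((continuousOn_const).mul (continuousOn_dotProduct hhc hhc))
  have hIcc : uIcc (0:ℝ) T = Icc 0 T := uIcc_of_le hT.le
  have hF1i : IntervalIntegrable F1 MeasureTheory.volume 0 T :=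
    (hIcc ▸ hF1c).intervalIntegrable
  have hF2i : IntervalIntegrable F2 MeasureTheory.volume 0 T :=
    (hIcc ▸ hF2c).intervalIntegrable
  have hG0i : IntervalIntegrable G0 MeasureTheory.volume 0 T :=
    (hIcc ▸ hG0c).intervalIntegrable
  -- the Lyapunov-like function
  set V : ℝ → ℝ := fun s => x s ⬝ᵥ (E s *ᵥ x s) + 2 * (h s ⬝ᵥ x s) with hV
  have hVder : ∀ t ∈ Icc (0:ℝ) T, HasDerivAt V (F1 t + lam * F2 t - G0 t) t := by
    intro t ht
    have hx' := hx t ht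
    have hh' := hh t ht
    have hE' := hE t ht
    have H1 : HasDerivAt (fun s => x s ⬝ᵥ (E s *ᵥ x s))
        (((A t + (1 / lam) • E t) *ᵥ (x t) + r t + (1 / lam) • h t) ⬝ᵥ (E t *ᵥ x t)
          + x t ⬝ᵥ ((Cᵀ * C - (A t)ᵀ * E t - E t * A t - (1 / lam) • (E t * E t)) *ᵥ x t
              + E t *ᵥ ((A t + (1 / lam) • E t) *ᵥ (x t) + r t + (1 / lam) • h t))) t :=
      hasDerivAt_dotProduct hx' (hasDerivAt_mulVec hE' hx')
    have H2 : HasDerivAt (fun s => h s ⬝ᵥ x s)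
        ((-(((A t)ᵀ + (1 / lam) • E t) *ᵥ (h t)) - (Cᵀ *ᵥ (ζ t) + E t *ᵥ (r t))) ⬝ᵥ x t
          + h t ⬝ᵥ ((A t + (1 / lam) • E t) *ᵥ (x t) + r t + (1 / lam) • h t)) t :=
      hasDerivAt_dotProduct hh' hx'
    have H := H1.add (H2.const_mul 2)
    have key := key_identity lam hlam' C (A t) (E t) (hEsymm t ht) (x t) (h t) (r t) (ζ t)
    have hval : F1 t + lam * F2 t - G0 t
        = (((A t + (1 / lam) • E t) *ᵥ (x t) + r t + (1 / lam) • h t) ⬝ᵥ (E t *ᵥ x t)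
          + x t ⬝ᵥ ((Cᵀ * C - (A t)ᵀ * E t - E t * A t - (1 / lam) • (E t * E t)) *ᵥ x t
              + E t *ᵥ ((A t + (1 / lam) • E t) *ᵥ (x t) + r t + (1 / lam) • h t))
          + 2 * ((-(((A t)ᵀ + (1 / lam) • E t) *ᵥ (h t)) - (Cᵀ *ᵥ (ζ t) + E t *ᵥ (r t))) ⬝ᵥ x t
          + h t ⬝ᵥ ((A t + (1 / lam) • E t) *ᵥ (x t) + r t + (1 / lam) • h t))) := by
      simp only [hF1, hF2, hG0, hu]
      linarith [key]
    rw [hval]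
    exact H
  have hVderIcc : ∀ t ∈ uIcc (0:ℝ) T, HasDerivAt V (F1 t + lam * F2 t - G0 t) t := by
    rw [hIcc]; exact hVder
  have hDi : IntervalIntegrable (fun t => F1 t + lam * F2 t - G0 t) MeasureTheory.volume 0 T :=
    ((hF1i.add (hF2i.const_mul lam)).sub hG0i)
  have hFTC := intervalIntegral.integral_eq_sub_of_hasDerivAt hVderIcc hDi
  have hsplit : (∫ t in (0:ℝ)..T, (F1 t + lam * F2 t - G0 t))
      = (∫ t in (0:ℝ)..T, F1 t) + lam * (∫ t in (0:ℝ)..T, F2 t) - ∫ t in (0:ℝ)..T, G0 t := by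
    rw [intervalIntegral.integral_sub (hF1i.add (hF2i.const_mul lam)) hG0i,
      intervalIntegral.integral_add hF1i (hF2i.const_mul lam),
      intervalIntegral.integral_const_mul]
  -- endpoint values
  have hdet : IsUnit (E T).det := (Matrix.isUnit_iff_isUnit_det _).mp hET
  have hETx : E T *ᵥ (x T) = -(h T) := by
    rw [hxT, Matrix.mulVec_neg, Matrix.mulVec_mulVec, Matrix.mul_nonsing_inv _ hdet,
      Matrix.one_mulVec]
  have hVT : V T = -(h T ⬝ᵥ (E T)⁻¹ *ᵥ (h T)) := by
    simp only [hV]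
    rw [hETx, hxT]
    simp only [dotProduct_neg, neg_dotProduct, neg_neg]
    rw [dotProduct_comm ((E T)⁻¹ *ᵥ h T) (h T)]
    ring
  have hV0 : V 0 = x₀ ⬝ᵥ Q *ᵥ x₀ := by
    simp only [hV]
    rw [hE0, hh0, hx₀]
    simp [zero_dotProduct]
  -- rewrite goal integrands
  have h1 : (∫ t in (0:ℝ)..T, evnorm (ζ t - C.mulVec (x t)) ^ 2) = ∫ t in (0:ℝ)..T, F1 t := by
    apply intervalIntegral.integral_congr; intro t _; simp only [evnorm_sq, hF1]
  have h2 : (∫ t in (0:ℝ)..T, evnorm (u t) ^ 2) = ∫ t in (0:ℝ)..T, F2 t := by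
    apply intervalIntegral.integral_congr; intro t _; simp only [evnorm_sq, hF2]
  have h3 : (∫ t in (0:ℝ)..T,
      (evnorm (ζ t) ^ 2 - 2 * (r t ⬝ᵥ h t) - (1 / lam) * evnorm (h t) ^ 2))
      = ∫ t in (0:ℝ)..T, G0 t := by
    apply intervalIntegral.integral_congr; intro t _; simp only [evnorm_sq, hG0]
  rw [h1, h2, h3]
  rw [hsplit] at hFTC
  rw [hVT, hV0] at hFTC
  linarith [hFTC]
end
end

section
/- Let x₀ ∈ ℝ^d, let u : [0,T] → ℝ^d be continuous and let x : [0,T] → ℝ^d be differentiable with x(0) = x₀ and x'(t) = A(t)x(t) + r(t) + u(t) for all t. Then the cost x₀ᵀQx₀ + ∫₀ᵀ ‖ζ(t) − Cx(t)‖² dt + λ ∫₀ᵀ ‖u(t)‖² dt equals S = ∫₀ᵀ (‖ζ(t)‖² − 2 r(t)ᵀ h(t) − (1/λ)‖h(t)‖²) dt − h(T)ᵀ E(T)⁻¹ h(T) if and only if u(t) = (1/λ)(E(t)x(t) + h(t)) for all t ∈ [0,T] and x(T) = −E(T)⁻¹ h(T). -/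
open Matrix Set intervalIntegral
open scoped Matrix

noncomputable section

set_option maxHeartbeats 1000000

lemma evnorm_sq_nonneg {n : Type*} [Fintype n] (v : n → ℝ) : 0 ≤ evnorm v ^ 2 := by
  rw [evnorm_sq]; exact Finset.sum_nonneg fun i _ => mul_self_nonneg _

lemma evnorm_eq_zero {n : Type*} [Fintype n] {v : n → ℝ} (hv : evnorm v ^ 2 = 0) : v = 0 := by
  rw [evnorm_sq] at hv
  funext i
  have := (Finset.sum_eq_zero_iff_of_nonneg
    (fun j (_ : j ∈ Finset.univ) => mul_self_nonneg (v j))).mp hv i (Finset.mem_univ i)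
  simpa [mul_self_eq_zero] using this

lemma dot_tmul {m n : Type*} [Fintype m] [Fintype n] (M : Matrix n m ℝ) (v : m → ℝ) (w : n → ℝ) :
    v ⬝ᵥ Mᵀ *ᵥ w = (M *ᵥ v) ⬝ᵥ w := by
  rw [dotProduct_mulVec, vecMul_transpose]

lemma key_identity_s14 (d d' : ℕ) (lam : ℝ) (hlam : lam ≠ 0)
    (C : Matrix (Fin d') (Fin d) ℝ) (Am Et : Matrix (Fin d) (Fin d) ℝ) (hEs : Etᵀ = Et)
    (X H R U : Fin d → ℝ) (Z : Fin d' → ℝ) :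
    ((Am *ᵥ X + R + U) ⬝ᵥ Et *ᵥ X
      + X ⬝ᵥ (Cᵀ * C - Amᵀ * Et - Et * Am - (1/lam) • (Et * Et)) *ᵥ X
      + X ⬝ᵥ Et *ᵥ (Am *ᵥ X + R + U))
     + 2 * ((-((Amᵀ + (1/lam) • Et) *ᵥ H) - (Cᵀ *ᵥ Z + Et *ᵥ R)) ⬝ᵥ X + H ⬝ᵥ (Am *ᵥ X + R + U))
    = evnorm (Z - C *ᵥ X) ^ 2 + lam * evnorm U ^ 2
      - lam * evnorm (U - (1/lam) • (Et *ᵥ X + H)) ^ 2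
      - (evnorm Z ^ 2 - 2 * (R ⬝ᵥ H) - (1/lam) * evnorm H ^ 2) := by
  have hsym : ∀ v w : Fin d → ℝ, v ⬝ᵥ Et *ᵥ w = (Et *ᵥ v) ⬝ᵥ w := by
    intro v w; conv_lhs => rw [← hEs]
    rw [dot_tmul]
  simp only [evnorm_sq, ← mulVec_mulVec, Matrix.sub_mulVec, Matrix.add_mulVec,
    Matrix.smul_mulVec, mulVec_add, mulVec_smul,
    dotProduct_add, add_dotProduct, dotProduct_sub, sub_dotProduct,
    dotProduct_smul, smul_dotProduct, dotProduct_neg, neg_dotProduct,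
    dot_tmul, smul_eq_mul]
  have e1 : X ⬝ᵥ Et *ᵥ R = R ⬝ᵥ Et *ᵥ X := by rw [hsym, dotProduct_comm]
  have e2 : Et *ᵥ R ⬝ᵥ X = R ⬝ᵥ Et *ᵥ X := (hsym R X).symm
  have e3 : X ⬝ᵥ Et *ᵥ U = U ⬝ᵥ Et *ᵥ X := by rw [hsym, dotProduct_comm]
  have e4 : Et *ᵥ X ⬝ᵥ U = U ⬝ᵥ Et *ᵥ X := dotProduct_comm _ _
  have e5 : X ⬝ᵥ Et *ᵥ (Et *ᵥ X) = Et *ᵥ X ⬝ᵥ Et *ᵥ X := hsym X _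
  have e6 : Et *ᵥ H ⬝ᵥ X = H ⬝ᵥ Et *ᵥ X := (hsym H X).symm
  have e7 : Et *ᵥ X ⬝ᵥ H = H ⬝ᵥ Et *ᵥ X := dotProduct_comm _ _
  have e8 : Amᵀ *ᵥ H ⬝ᵥ X = H ⬝ᵥ Am *ᵥ X := by
    rw [dotProduct_comm, dot_tmul, dotProduct_comm]
  have e9 : Cᵀ *ᵥ Z ⬝ᵥ X = Z ⬝ᵥ C *ᵥ X := by
    rw [dotProduct_comm, dot_tmul, dotProduct_comm]
  have e10 : C *ᵥ X ⬝ᵥ Z = Z ⬝ᵥ C *ᵥ X := dotProduct_comm _ _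
  have e11 : H ⬝ᵥ U = U ⬝ᵥ H := dotProduct_comm _ _
  have e12 : H ⬝ᵥ R = R ⬝ᵥ H := dotProduct_comm _ _
  simp only [e12, e1, e2, e3, e4, e5, e6, e7, e8, e9, e10, e11]
  field_simp
  ring

lemma hasDerivAt_dot {d : ℕ} {x y : ℝ → Fin d → ℝ} {x' y' : Fin d → ℝ} {t : ℝ}
    (hx : ∀ i, HasDerivAt (fun s => x s i) (x' i) t)
    (hy : ∀ i, HasDerivAt (fun s => y s i) (y' i) t) :
    HasDerivAt (fun s => x s ⬝ᵥ y s) (x' ⬝ᵥ y t + x t ⬝ᵥ y') t := by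
  simp only [dotProduct]
  have : HasDerivAt (fun s => ∑ i, x s i * y s i)
      (∑ i, (x' i * y t i + x t i * y' i)) t :=
    HasDerivAt.fun_sum fun i _ => (hx i).mul (hy i)
  simpa [Finset.sum_add_distrib] using this

lemma hasDerivAt_mulVec_s14 {d : ℕ} {E : ℝ → Matrix (Fin d) (Fin d) ℝ} {y : ℝ → Fin d → ℝ}
    {E' : Matrix (Fin d) (Fin d) ℝ} {y' : Fin d → ℝ} {t : ℝ}
    (hE : ∀ i j, HasDerivAt (fun s => E s i j) (E' i j) t)
    (hy : ∀ i, HasDerivAt (fun s => y s i) (y' i) t) :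
    ∀ i, HasDerivAt (fun s => (E s *ᵥ y s) i) ((E' *ᵥ y t + E t *ᵥ y') i) t := by
  intro i
  simp only [mulVec, dotProduct, Pi.add_apply]
  have : HasDerivAt (fun s => ∑ j, E s i j * y s j)
      (∑ j, (E' i j * y t j + E t i j * y' j)) t :=
    HasDerivAt.fun_sum fun j _ => (hE i j).mul (hy j)
  simpa [Finset.sum_add_distrib] using this

lemma zero_of_integral_zero {T : ℝ} (hT : 0 < T) {g : ℝ → ℝ}
    (hg : ContinuousOn g (Icc 0 T)) (hnn : ∀ t ∈ Icc 0 T, 0 ≤ g t)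
    (hzero : (∫ t in (0:ℝ)..T, g t) = 0) : ∀ t ∈ Icc 0 T, g t = 0 := by
  have hint : ∀ s₁ ∈ Icc (0:ℝ) T, ∀ s₂ ∈ Icc (0:ℝ) T,
      IntervalIntegrable g MeasureTheory.volume s₁ s₂ := by
    intro s₁ h1 s₂ h2
    exact (hg.mono (uIcc_subset_Icc h1 h2)).intervalIntegrable
  have h0T : (0:ℝ) ∈ Icc (0:ℝ) T := left_mem_Icc.2 hT.le
  have hTT : T ∈ Icc (0:ℝ) T := right_mem_Icc.2 hT.le
  set G := fun s => ∫ t in (0:ℝ)..s, g t with hGdef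
  have hG0 : ∀ s ∈ Icc (0:ℝ) T, G s = 0 := by
    intro s hs
    have h1 : 0 ≤ G s :=
      intervalIntegral.integral_nonneg hs.1 (fun t ht => hnn t ⟨ht.1, le_trans ht.2 hs.2⟩)
    have h3 : 0 ≤ ∫ t in s..T, g t :=
      intervalIntegral.integral_nonneg hs.2 (fun t ht => hnn t ⟨le_trans hs.1 ht.1, ht.2⟩)
    have h2 : G s + ∫ t in s..T, g t = G T :=
      intervalIntegral.integral_add_adjacent_intervals (hint 0 h0T s hs) (hint s hs T hTT)
    have hGT : G T = 0 := hzero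
    linarith
  intro t ht
  haveI : Fact (t ∈ Icc (0:ℝ) T) := ⟨ht⟩
  have hmeas : StronglyMeasurableAtFilter g (nhdsWithin t (Icc (0:ℝ) T))
      MeasureTheory.volume :=
    ⟨Icc 0 T, self_mem_nhdsWithin, (hg.aestronglyMeasurable measurableSet_Icc)⟩
  have hd : HasDerivWithinAt G (g t) (Icc (0:ℝ) T) t :=
    intervalIntegral.integral_hasDerivWithinAt_right (hint 0 h0T t ht) hmeas (hg t ht)
  have hd0 : HasDerivWithinAt G (0:ℝ) (Icc (0:ℝ) T) t :=
    (hasDerivWithinAt_const t _ (0:ℝ)).congr hG0 (hG0 t ht)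
  have hu : UniqueDiffWithinAt ℝ (Icc (0:ℝ) T) t := uniqueDiffOn_Icc hT t ht
  rw [← hd.derivWithin hu, hd0.derivWithin hu]

lemma contOn_mulVec {d d' : ℕ} {M : ℝ → Matrix (Fin d') (Fin d) ℝ} {v : ℝ → Fin d → ℝ}
    {s : Set ℝ} (hM : ∀ i j, ContinuousOn (fun t => M t i j) s)
    (hv : ∀ i, ContinuousOn (fun t => v t i) s) :
    ∀ i, ContinuousOn (fun t => (M t *ᵥ v t) i) s := by
  intro i
  simp only [mulVec, dotProduct]
  exact continuousOn_finset_sum _ fun j _ => (hM i j).mul (hv j)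

lemma contOn_dot {d : ℕ} {v w : ℝ → Fin d → ℝ} {s : Set ℝ}
    (hv : ∀ i, ContinuousOn (fun t => v t i) s)
    (hw : ∀ i, ContinuousOn (fun t => w t i) s) :
    ContinuousOn (fun t => v t ⬝ᵥ w t) s := by
  simp only [dotProduct]
  exact continuousOn_finset_sum _ fun j _ => (hv j).mul (hw j)

lemma contOn_evnorm_sq {d : ℕ} {v : ℝ → Fin d → ℝ} {s : Set ℝ}
    (hv : ∀ i, ContinuousOn (fun t => v t i) s) :
    ContinuousOn (fun t => evnorm (v t) ^ 2) s := by
  simp only [evnorm_sq]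
  exact contOn_dot hv hv

/-- characterization of optimality. The cost of an admissible pair
`(x₀,u)` equals the closed-form value `S` if and only if `u = (1/λ)(Ex + h)` on `[0,T]`
and `x(T) = −E(T)⁻¹ h(T)`. -/
theorem statement14
    (d d' : ℕ) (hd : 1 ≤ d) (hd' : 1 ≤ d') (T : ℝ) (hT : 0 < T) (lam : ℝ) (hlam : 0 < lam)
    (C : Matrix (Fin d') (Fin d) ℝ)
    (A : ℝ → Matrix (Fin d) (Fin d) ℝ)
    (r : ℝ → Fin d → ℝ) (ζ : ℝ → Fin d' → ℝ)
    (hA : ∀ i j, ContinuousOn (fun t => A t i j) (Icc 0 T))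
    (hr : ∀ i, ContinuousOn (fun t => r t i) (Icc 0 T))
    (hζ : ∀ i, ContinuousOn (fun t => ζ t i) (Icc 0 T))
    (Q : Matrix (Fin d) (Fin d) ℝ) (hQ : Q.PosSemidef)
    (E : ℝ → Matrix (Fin d) (Fin d) ℝ)
    (hE0 : E 0 = Q)
    (hE : ∀ t ∈ Icc (0:ℝ) T, ∀ i j,
      HasDerivAt (fun s => E s i j)
        ((Cᵀ * C - (A t)ᵀ * E t - E t * A t - (1 / lam) • (E t * E t)) i j) t)
    (hEsymm : ∀ t ∈ Icc (0:ℝ) T, (E t)ᵀ = E t)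
    (hET : (E T).PosDef)
    (h : ℝ → Fin d → ℝ)
    (hh0 : h 0 = 0)
    (hh : ∀ t ∈ Icc (0:ℝ) T, ∀ i,
      HasDerivAt (fun s => h s i)
        ((-(((A t)ᵀ + (1 / lam) • E t).mulVec (h t))
          - (Cᵀ.mulVec (ζ t) + (E t).mulVec (r t))) i) t)
    (x₀ : Fin d → ℝ) (u : ℝ → Fin d → ℝ)
    (hu : ∀ i, ContinuousOn (fun t => u t i) (Icc 0 T))
    (x : ℝ → Fin d → ℝ)
    (hx0 : x 0 = x₀)
    (hx : ∀ t ∈ Icc (0:ℝ) T, ∀ i,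
      HasDerivAt (fun s => x s i) (((A t).mulVec (x t) + r t + u t) i) t) :
    x₀ ⬝ᵥ Q.mulVec x₀
        + (∫ t in (0:ℝ)..T, evnorm (ζ t - C.mulVec (x t)) ^ 2)
        + lam * ∫ t in (0:ℝ)..T, evnorm (u t) ^ 2
      = (∫ t in (0:ℝ)..T,
          (evnorm (ζ t) ^ 2 - 2 * (r t ⬝ᵥ h t) - (1 / lam) * evnorm (h t) ^ 2))
        - h T ⬝ᵥ (E T)⁻¹.mulVec (h T)
    ↔ ((∀ t ∈ Icc (0:ℝ) T, u t = (1 / lam) • ((E t).mulVec (x t) + h t))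
        ∧ x T = -(E T)⁻¹.mulVec (h T)) := by
  have hlam' : lam ≠ 0 := ne_of_gt hlam
  have h0T : (0:ℝ) ∈ Icc (0:ℝ) T := left_mem_Icc.2 hT.le
  have hTT : T ∈ Icc (0:ℝ) T := right_mem_Icc.2 hT.le
  have huIcc : uIcc (0:ℝ) T = Icc (0:ℝ) T := uIcc_of_le hT.le
  have cx : ∀ i, ContinuousOn (fun t => x t i) (Icc 0 T) :=
    fun i t ht => ((hx t ht i).continuousAt).continuousWithinAt
  have ch : ∀ i, ContinuousOn (fun t => h t i) (Icc 0 T) :=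
    fun i t ht => ((hh t ht i).continuousAt).continuousWithinAt
  have cE : ∀ i j, ContinuousOn (fun t => E t i j) (Icc 0 T) :=
    fun i j t ht => ((hE t ht i j).continuousAt).continuousWithinAt
  set Φ : ℝ → ℝ := fun s => x s ⬝ᵥ E s *ᵥ x s + 2 * (h s ⬝ᵥ x s) with hΦdef
  set g : ℝ → ℝ := fun t => evnorm (u t - (1/lam) • (E t *ᵥ x t + h t)) ^ 2 with hgdef
  set ψ : ℝ → ℝ := fun t => evnorm (ζ t - C *ᵥ x t) ^ 2 + lam * evnorm (u t) ^ 2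
      - lam * g t
      - (evnorm (ζ t) ^ 2 - 2 * (r t ⬝ᵥ h t) - (1/lam) * evnorm (h t) ^ 2) with hψdef
  -- derivative of Φ
  have hderiv : ∀ t ∈ Icc (0:ℝ) T, HasDerivAt Φ (ψ t) t := by
    intro t ht
    have d1 := hasDerivAt_dot (hx t ht) (hasDerivAt_mulVec_s14 (hE t ht) (hx t ht))
    have d2 := (hasDerivAt_dot (hh t ht) (hx t ht)).const_mul (2:ℝ)
    have dd := d1.add d2
    rw [hΦdef]
    convert dd using 1
    · rfl
    · rfl
    · rfl
    rw [hψdef, hgdef]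
    beta_reduce
    rw [← key_identity_s14 d d' lam hlam' C (A t) (E t) (hEsymm t ht) (x t) (h t) (r t) (u t) (ζ t)]
    simp only [dotProduct_add]
    ring
  -- continuity of the pieces
  have cg : ContinuousOn g (Icc 0 T) := by
    rw [hgdef]
    apply contOn_evnorm_sq
    intro i
    apply (hu i).sub
    simp only [Pi.smul_apply, Pi.add_apply, smul_eq_mul]
    exact continuousOn_const.mul ((contOn_mulVec cE cx i).add (ch i))
  have c1 : ContinuousOn (fun t => evnorm (ζ t - C *ᵥ x t) ^ 2) (Icc 0 T) := by
    apply contOn_evnorm_sq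
    intro i
    exact (hζ i).sub (contOn_mulVec (M := fun _ => C) (fun i j => continuousOn_const) cx i)
  have c2 : ContinuousOn (fun t => evnorm (u t) ^ 2) (Icc 0 T) := contOn_evnorm_sq hu
  have c4 : ContinuousOn
      (fun t => evnorm (ζ t) ^ 2 - 2 * (r t ⬝ᵥ h t) - (1/lam) * evnorm (h t) ^ 2) (Icc 0 T) := by
    apply ContinuousOn.sub
    apply ContinuousOn.sub (contOn_evnorm_sq hζ)
    · exact continuousOn_const.mul (contOn_dot hr ch)
    · exact continuousOn_const.mul (contOn_evnorm_sq ch)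
  have mkInt : ∀ {f : ℝ → ℝ}, ContinuousOn f (Icc 0 T) →
      IntervalIntegrable f MeasureTheory.volume 0 T := by
    intro f hf
    apply ContinuousOn.intervalIntegrable
    rwa [huIcc]
  have i1 := mkInt c1
  have i2 := mkInt c2
  have ig := mkInt cg
  have i4 := mkInt c4
  have iψ : IntervalIntegrable ψ MeasureTheory.volume 0 T := by
    rw [hψdef]
    exact ((i1.add (i2.const_mul lam)).sub (ig.const_mul lam)).sub i4
  have cψ : ContinuousOn ψ (Icc 0 T) := by
    rw [hψdef]
    exact ((c1.add (continuousOn_const.mul c2)).sub (continuousOn_const.mul cg)).sub c4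
  -- FTC
  have hFTC : (∫ t in (0:ℝ)..T, ψ t) = Φ T - Φ 0 := by
    apply intervalIntegral.integral_eq_sub_of_hasDerivAt
    · intro t ht
      exact hderiv t (huIcc ▸ ht)
    · exact iψ
  -- split the integral
  have hsplit : (∫ t in (0:ℝ)..T, ψ t)
      = (∫ t in (0:ℝ)..T, evnorm (ζ t - C *ᵥ x t) ^ 2)
        + lam * (∫ t in (0:ℝ)..T, evnorm (u t) ^ 2)
        - lam * (∫ t in (0:ℝ)..T, g t)
        - ∫ t in (0:ℝ)..T,
            (evnorm (ζ t) ^ 2 - 2 * (r t ⬝ᵥ h t) - (1/lam) * evnorm (h t) ^ 2) := by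
    rw [hψdef]
    rw [intervalIntegral.integral_sub ((i1.add (i2.const_mul lam)).sub (ig.const_mul lam)) i4,
      intervalIntegral.integral_sub (i1.add (i2.const_mul lam)) (ig.const_mul lam),
      intervalIntegral.integral_add i1 (i2.const_mul lam),
      intervalIntegral.integral_const_mul, intervalIntegral.integral_const_mul]
  have hΦ0 : Φ 0 = x₀ ⬝ᵥ Q *ᵥ x₀ := by
    rw [hΦdef]
    simp [hx0, hh0, hE0]
  -- quadratic form at T
  have hdet : IsUnit (E T).det := hET.det_pos.ne'.isUnit
  have hEk : E T *ᵥ ((E T)⁻¹ *ᵥ h T) = h T := by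
    rw [mulVec_mulVec, Matrix.mul_nonsing_inv _ hdet, one_mulVec]
  have hsymT : ∀ v w : Fin d → ℝ, v ⬝ᵥ E T *ᵥ w = (E T *ᵥ v) ⬝ᵥ w := by
    intro v w
    conv_lhs => rw [← hEsymm T hTT]
    rw [dot_tmul]
  have hquad : Φ T + h T ⬝ᵥ (E T)⁻¹ *ᵥ h T
      = (x T + (E T)⁻¹ *ᵥ h T) ⬝ᵥ E T *ᵥ (x T + (E T)⁻¹ *ᵥ h T) := by
    rw [hΦdef]
    simp only [mulVec_add, dotProduct_add, add_dotProduct, hEk]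
    have q1 : ((E T)⁻¹ *ᵥ h T) ⬝ᵥ E T *ᵥ x T = h T ⬝ᵥ x T := by rw [hsymT, hEk]
    have q2 : x T ⬝ᵥ h T = h T ⬝ᵥ x T := dotProduct_comm _ _
    have q3 : ((E T)⁻¹ *ᵥ h T) ⬝ᵥ h T = h T ⬝ᵥ (E T)⁻¹ *ᵥ h T := dotProduct_comm _ _
    rw [q1, q2, q3]
    ring
  have keyeq : x₀ ⬝ᵥ Q *ᵥ x₀
      + (∫ t in (0:ℝ)..T, evnorm (ζ t - C *ᵥ x t) ^ 2)
      + lam * (∫ t in (0:ℝ)..T, evnorm (u t) ^ 2)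
      - ((∫ t in (0:ℝ)..T,
          (evnorm (ζ t) ^ 2 - 2 * (r t ⬝ᵥ h t) - (1/lam) * evnorm (h t) ^ 2))
        - h T ⬝ᵥ (E T)⁻¹ *ᵥ h T)
      = lam * (∫ t in (0:ℝ)..T, g t)
        + (x T + (E T)⁻¹ *ᵥ h T) ⬝ᵥ E T *ᵥ (x T + (E T)⁻¹ *ᵥ h T) := by
    rw [← hquad]
    have := hFTC
    rw [hsplit] at this
    linear_combination this - hΦ0
  have hI3nn : 0 ≤ ∫ t in (0:ℝ)..T, g t := by
    apply intervalIntegral.integral_nonneg hT.le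
    intro t ht
    rw [hgdef]
    exact evnorm_sq_nonneg _
  constructor
  · intro heq
    have h0 : lam * (∫ t in (0:ℝ)..T, g t)
        + (x T + (E T)⁻¹ *ᵥ h T) ⬝ᵥ E T *ᵥ (x T + (E T)⁻¹ *ᵥ h T) = 0 := by
      rw [← keyeq]
      linarith [heq]
    have hwnn : 0 ≤ (x T + (E T)⁻¹ *ᵥ h T) ⬝ᵥ E T *ᵥ (x T + (E T)⁻¹ *ᵥ h T) := by
      rcases eq_or_ne (x T + (E T)⁻¹ *ᵥ h T) 0 with hz | hz
      · rw [hz]; simp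
      · have := hET.dotProduct_mulVec_pos hz
        simp only [star_trivial] at this
        exact this.le
    have hlamI3 : 0 ≤ lam * (∫ t in (0:ℝ)..T, g t) := mul_nonneg hlam.le hI3nn
    have hI3 : (∫ t in (0:ℝ)..T, g t) = 0 := by
      have : lam * (∫ t in (0:ℝ)..T, g t) = 0 := by linarith
      exact (mul_eq_zero.mp this).resolve_left hlam'
    have hwz : x T + (E T)⁻¹ *ᵥ h T = 0 := by
      by_contra hne
      have := hET.dotProduct_mulVec_pos hne
      simp only [star_trivial] at this
      linarith
    refine ⟨?_, ?_⟩
    · intro t ht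
      have hg0 := zero_of_integral_zero hT cg
        (fun t _ => by rw [hgdef]; exact evnorm_sq_nonneg _) hI3 t ht
      rw [hgdef] at hg0
      have := evnorm_eq_zero hg0
      exact sub_eq_zero.mp this
    · exact eq_neg_of_add_eq_zero_left hwz
  · rintro ⟨hueq, hxT⟩
    have hI3 : (∫ t in (0:ℝ)..T, g t) = 0 := by
      have hEq : EqOn g (fun _ => (0:ℝ)) (uIcc (0:ℝ) T) := by
        rw [huIcc]
        intro t ht
        rw [hgdef]
        simp only [hueq t ht, sub_self]
        rw [evnorm_sq]
        simp
      rw [intervalIntegral.integral_congr hEq]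
      simp
    have hwz : x T + (E T)⁻¹ *ᵥ h T = 0 := by
      rw [hxT]
      simp
    rw [hwz] at keyeq
    simp only [hI3, mul_zero, zero_dotProduct, add_zero] at keyeq
    linarith [keyeq]
end
end

section
/- Let Ā ≥ 0 and Ē ≥ 0 be such that ‖A(t)‖ ≤ Ā and ‖E_λ(t)‖ ≤ Ē for all t ∈ [0,T]. Then for every t ∈ [0,T]: ‖E_λ(t) − E_∞(t)‖ ≤ (T Ē² / λ) · e^{2ĀT}. In particular, as λ → ∞ the Riccati solution E_λ(t) converges to the solution E_∞(t) of the linear (Lyapunov) matrix ODE for every t. -/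
open Matrix Set intervalIntegral
open scoped Matrix

noncomputable section

/-- Frobenius norm of a real matrix. -/
def frob {m n : Type*} [Fintype m] [Fintype n] (M : Matrix m n ℝ) : ℝ :=
  Real.sqrt (∑ i, ∑ j, (M i j) ^ 2)

section Aux

attribute [local instance] Matrix.frobeniusNormedAddCommGroup Matrix.frobeniusNormedSpace

lemma frob_eq_norm {m n : Type*} [Fintype m] [Fintype n] (M : Matrix m n ℝ) :
    frob M = ‖M‖ := by
  rw [Matrix.frobenius_norm_def, frob, Real.sqrt_eq_rpow]
  congr 1
  refine Finset.sum_congr rfl fun i _ => Finset.sum_congr rfl fun j _ => ?_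
  rw [Real.rpow_two, Real.norm_eq_abs, sq_abs]

lemma sum_smul_std {m n : Type*} [Fintype m] [Fintype n] [DecidableEq m] [DecidableEq n]
    (M : Matrix m n ℝ) :
    ∑ i, ∑ j, M i j • Matrix.single i j (1:ℝ) = M := by
  simp_rw [Matrix.smul_single, smul_eq_mul, mul_one]
  exact (Matrix.matrix_eq_sum_single M).symm

lemma exp_sub_one_le (y : ℝ) (hy : 0 ≤ y) : Real.exp y - 1 ≤ y * Real.exp y := by
  have h := Real.add_one_le_exp (-y)
  rw [Real.exp_neg] at h
  have hp := Real.exp_pos y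
  have h2 : (-y + 1) * Real.exp y ≤ (Real.exp y)⁻¹ * Real.exp y :=
    mul_le_mul_of_nonneg_right h hp.le
  rw [inv_mul_cancel₀ hp.ne'] at h2
  nlinarith [h2]

/-- comparison of the Riccati solution `E_λ` with the solution `E_∞` of
the linear (Lyapunov) matrix ODE: `‖E_λ(t) − E_∞(t)‖ ≤ (T Ē²/λ) e^{2ĀT}` for all
`t ∈ [0,T]`. -/
theorem statement16
    (d d' : ℕ) (hd : 1 ≤ d) (hd' : 1 ≤ d') (T : ℝ) (hT : 0 < T) (lam : ℝ) (hlam : 0 < lam)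
    (C : Matrix (Fin d') (Fin d) ℝ)
    (A : ℝ → Matrix (Fin d) (Fin d) ℝ)
    (hA : ∀ i j, ContinuousOn (fun t => A t i j) (Icc 0 T))
    (Q : Matrix (Fin d) (Fin d) ℝ) (hQ : Q.PosSemidef)
    (Elam Einf : ℝ → Matrix (Fin d) (Fin d) ℝ)
    (hElam0 : Elam 0 = Q) (hEinf0 : Einf 0 = Q)
    (hElam : ∀ t ∈ Icc (0:ℝ) T, ∀ i j,
      HasDerivAt (fun s => Elam s i j)
        ((Cᵀ * C - (A t)ᵀ * Elam t - Elam t * A t - (1 / lam) • (Elam t * Elam t)) i j) t)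
    (hEinf : ∀ t ∈ Icc (0:ℝ) T, ∀ i j,
      HasDerivAt (fun s => Einf s i j)
        ((Cᵀ * C - (A t)ᵀ * Einf t - Einf t * A t) i j) t)
    (Abar Ebar : ℝ) (hAbar : 0 ≤ Abar) (hEbar : 0 ≤ Ebar)
    (hAb : ∀ t ∈ Icc (0:ℝ) T, frob (A t) ≤ Abar)
    (hEb : ∀ t ∈ Icc (0:ℝ) T, frob (Elam t) ≤ Ebar) :
    ∀ t ∈ Icc (0:ℝ) T,
      frob (Elam t - Einf t) ≤ (T * Ebar ^ 2 / lam) * Real.exp (2 * Abar * T) := by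
  set D : ℝ → Matrix (Fin d) (Fin d) ℝ := fun s => Elam s - Einf s with hD
  set F : ℝ → Matrix (Fin d) (Fin d) ℝ := fun t =>
    (Cᵀ * C - (A t)ᵀ * Elam t - Elam t * A t - (1 / lam) • (Elam t * Elam t)) -
      (Cᵀ * C - (A t)ᵀ * Einf t - Einf t * A t) with hF
  -- derivative of D
  have hDderiv : ∀ t ∈ Icc (0:ℝ) T, HasDerivAt D (F t) t := by
    intro t ht
    have h : ∀ i j, HasDerivAt (fun s => D s i j) (F t i j) t := fun i j =>
      ((hElam t ht i j).sub (hEinf t ht i j))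
    have h2 : HasDerivAt (fun s => ∑ i, ∑ j, (D s i j) • Matrix.single i j (1:ℝ))
        (∑ i, ∑ j, (F t i j) • Matrix.single i j (1:ℝ)) t :=
      HasDerivAt.fun_sum fun i _ => HasDerivAt.fun_sum fun j _ => (h i j).smul_const _
    have e1 : (fun s => ∑ i, ∑ j, (D s i j) • Matrix.single i j (1:ℝ)) = D := by
      funext s; exact sum_smul_std (D s)
    rw [e1, sum_smul_std (F t)] at h2
    exact h2
  -- rewrite F
  have hFeq : ∀ t, F t = (A t)ᵀ * (Einf t - Elam t) + (Einf t - Elam t) * (A t)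
      - (1 / lam) • (Elam t * Elam t) := by
    intro t
    simp only [hF, mul_sub, sub_mul]
    abel
  -- norm bound on F
  have hε : (0:ℝ) ≤ Ebar ^ 2 / lam := div_nonneg (sq_nonneg _) hlam.le
  have hbound : ∀ t ∈ Ico (0:ℝ) T, ‖F t‖ ≤ 2 * Abar * ‖D t‖ + Ebar ^ 2 / lam := by
    intro t ht
    have ht' : t ∈ Icc (0:ℝ) T := Ico_subset_Icc_self ht
    have hAt : ‖A t‖ ≤ Abar := by rw [← frob_eq_norm]; exact hAb t ht'
    have hEt : ‖Elam t‖ ≤ Ebar := by rw [← frob_eq_norm]; exact hEb t ht'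
    have hDt : (0:ℝ) ≤ ‖D t‖ := norm_nonneg _
    have h1 : ‖(A t)ᵀ * (Einf t - Elam t)‖ ≤ Abar * ‖D t‖ := by
      calc ‖(A t)ᵀ * (Einf t - Elam t)‖ ≤ ‖(A t)ᵀ‖ * ‖Einf t - Elam t‖ :=
            Matrix.frobenius_norm_mul _ _
        _ = ‖A t‖ * ‖D t‖ := by rw [Matrix.frobenius_norm_transpose, norm_sub_rev]
        _ ≤ Abar * ‖D t‖ := mul_le_mul_of_nonneg_right hAt hDt
    have h2 : ‖(Einf t - Elam t) * (A t)‖ ≤ Abar * ‖D t‖ := by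
      calc ‖(Einf t - Elam t) * (A t)‖ ≤ ‖Einf t - Elam t‖ * ‖A t‖ :=
            Matrix.frobenius_norm_mul _ _
        _ = ‖D t‖ * ‖A t‖ := by rw [norm_sub_rev]
        _ ≤ ‖D t‖ * Abar := mul_le_mul_of_nonneg_left hAt hDt
        _ = Abar * ‖D t‖ := mul_comm _ _
    have h3 : ‖(1 / lam) • (Elam t * Elam t)‖ ≤ Ebar ^ 2 / lam := by
      rw [norm_smul, Real.norm_eq_abs, abs_of_pos (by positivity : (0:ℝ) < 1 / lam)]
      have : ‖Elam t * Elam t‖ ≤ Ebar ^ 2 := by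
        calc ‖Elam t * Elam t‖ ≤ ‖Elam t‖ * ‖Elam t‖ := Matrix.frobenius_norm_mul _ _
          _ ≤ Ebar * Ebar := mul_le_mul hEt hEt (norm_nonneg _) hEbar
          _ = Ebar ^ 2 := (sq Ebar).symm
      calc (1 / lam) * ‖Elam t * Elam t‖ ≤ (1 / lam) * Ebar ^ 2 :=
            mul_le_mul_of_nonneg_left this (by positivity)
        _ = Ebar ^ 2 / lam := by ring
    calc ‖F t‖ = ‖(A t)ᵀ * (Einf t - Elam t) + (Einf t - Elam t) * (A t)
          - (1 / lam) • (Elam t * Elam t)‖ := by rw [hFeq]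
      _ ≤ ‖(A t)ᵀ * (Einf t - Elam t) + (Einf t - Elam t) * (A t)‖
          + ‖(1 / lam) • (Elam t * Elam t)‖ := norm_sub_le _ _
      _ ≤ ‖(A t)ᵀ * (Einf t - Elam t)‖ + ‖(Einf t - Elam t) * (A t)‖
          + ‖(1 / lam) • (Elam t * Elam t)‖ := by
            gcongr; exact norm_add_le _ _
      _ ≤ Abar * ‖D t‖ + Abar * ‖D t‖ + Ebar ^ 2 / lam := by
            gcongr
      _ = 2 * Abar * ‖D t‖ + Ebar ^ 2 / lam := by ring
  -- Grönwall
  have hcont : ContinuousOn D (Icc 0 T) := fun t ht =>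
    (hDderiv t ht).continuousAt.continuousWithinAt
  have hD0 : ‖D 0‖ ≤ 0 := by
    simp [hD, hElam0, hEinf0]
  have gron := norm_le_gronwallBound_of_norm_deriv_right_le (f := D) (f' := F)
    (δ := 0) (K := 2 * Abar) (ε := Ebar ^ 2 / lam) (a := 0) (b := T)
    hcont (fun x hx => (hDderiv x (Ico_subset_Icc_self hx)).hasDerivWithinAt) hD0 hbound
  intro t ht
  have key := gron t ht
  rw [sub_zero] at key
  have final : gronwallBound 0 (2 * Abar) (Ebar ^ 2 / lam) t
      ≤ T * Ebar ^ 2 / lam * Real.exp (2 * Abar * T) := by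
    rcases eq_or_lt_of_le hAbar with h0 | hpos
    · subst h0
      rw [show (2:ℝ) * 0 = 0 by ring, gronwallBound_K0]
      simp only [zero_add, zero_mul, Real.exp_zero, mul_one, mul_div_assoc]
      nlinarith [ht.1, ht.2, hε]
    · have hK : (2 * Abar) ≠ 0 := by positivity
      rw [gronwallBound_of_K_ne_0 hK]
      simp only [zero_mul, zero_add]
      have hy : 0 ≤ 2 * Abar * t := mul_nonneg (by positivity) ht.1
      have h1 : Real.exp (2 * Abar * t) - 1 ≤ (2 * Abar * t) * Real.exp (2 * Abar * t) :=
        exp_sub_one_le _ hy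
      have h2 : (2 * Abar * t) * Real.exp (2 * Abar * t)
          ≤ (2 * Abar * T) * Real.exp (2 * Abar * T) := by
        have hle : 2 * Abar * t ≤ 2 * Abar * T := by nlinarith [ht.2]
        exact mul_le_mul hle (Real.exp_le_exp.2 hle) (Real.exp_nonneg _) (by positivity)
      have h3 : Real.exp (2 * Abar * t) - 1 ≤ (2 * Abar * T) * Real.exp (2 * Abar * T) :=
        h1.trans h2
      have h4 : Ebar ^ 2 / lam / (2 * Abar) * (Real.exp (2 * Abar * t) - 1)
          ≤ Ebar ^ 2 / lam / (2 * Abar) * ((2 * Abar * T) * Real.exp (2 * Abar * T)) :=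
        mul_le_mul_of_nonneg_left h3 (by positivity)
      have h5 : Ebar ^ 2 / lam / (2 * Abar) * ((2 * Abar * T) * Real.exp (2 * Abar * T))
          = T * Ebar ^ 2 / lam * Real.exp (2 * Abar * T) := by
        field_simp
      rw [h5] at h4
      exact h4
  calc frob (Elam t - Einf t) = ‖D t‖ := frob_eq_norm _
    _ ≤ gronwallBound 0 (2 * Abar) (Ebar ^ 2 / lam) t := key
    _ ≤ T * Ebar ^ 2 / lam * Real.exp (2 * Abar * T) := final

end Aux
end
end
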